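/- With the notation of the context, a point (x,y) ∈ ℤ² lies outside ℳ_ℤ(∅) ∪ ℳ_ℤ(U) ∪ ℳ_ℤ(V) ∪ ℳ_ℤ(U∪V) if and only if one of the following holds: (i) −ℓ₂ < y < 0; or (ii) y ≥ 0 and −ℓ₁ < x < c^{ℓ₂}·y; or (iii) y ≤ −ℓ₂ and 0 > x + ĉ > c^{ℓ₂}·(y + ℓ₂) − ℓ₁. (This is the description of the immaculate line bundles on the smooth complete toric variety of Picard rank 2 determined by (ℓ₁, ℓ₂, c).) -/

import Mathlib

open scoped BigOperators

/-- The integral class map `π : ℤ^{ℓ₁} × ℤ^{ℓ₂} → ℤ²` for the Picard-rank-2 data. -/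
def picTwoPiZ (ℓ₁ ℓ₂ : ℕ) (c : Fin ℓ₂ → ℤ)
    (x : Fin ℓ₁ ⊕ Fin ℓ₂ → ℤ) : ℤ × ℤ :=
  ((∑ i, x (Sum.inl i)) + ∑ j, c j * x (Sum.inr j), ∑ j, x (Sum.inr j))

/-- The integral maculate set `ℳ_ℤ(R)`. -/
def picTwoMacZ (ℓ₁ ℓ₂ : ℕ) (c : Fin ℓ₂ → ℤ)
    (R : Set (Fin ℓ₁ ⊕ Fin ℓ₂)) : Set (ℤ × ℤ) :=
  picTwoPiZ ℓ₁ ℓ₂ c '' {x | (∀ ρ ∈ R, x ρ ≤ -1) ∧ ∀ ρ ∉ R, 0 ≤ x ρ}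

lemma pic2_lt {n : ℕ} (h : 2 ≤ n) : n - 1 < n := by omega

lemma pic2_pos {n : ℕ} (h : 2 ≤ n) : 0 < n := by omega

lemma pic2_sum_ite_const {n : ℕ} (k : Fin n) (v d : ℤ) :
    ∑ i, (if i = k then v else d) = v - d + n * d := by
  have h : ∀ i : Fin n, (if i = k then v else d) = (if i = k then v - d else 0) + d := by
    intro i; split <;> ring
  simp only [h, Finset.sum_add_distrib, Finset.sum_const, Finset.card_univ,
    Fintype.card_fin, nsmul_eq_mul]
  simp

lemma pic2_sum_mul_ite_const {n : ℕ} (c : Fin n → ℤ) (k : Fin n) (v d : ℤ) :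
    ∑ i, c i * (if i = k then v else d) = c k * (v - d) + d * ∑ i, c i := by
  have h : ∀ i : Fin n, c i * (if i = k then v else d)
      = (if i = k then c k * (v - d) else 0) + d * c i := by
    intro i; split
    · subst ‹i = k›; ring
    · ring
  simp only [h, Finset.sum_add_distrib, ← Finset.mul_sum]
  simp

lemma pic2_mem_mac {ℓ₁ ℓ₂ : ℕ} {c : Fin ℓ₂ → ℤ} {R : Set (Fin ℓ₁ ⊕ Fin ℓ₂)} {p : ℤ × ℤ} :
    p ∈ picTwoMacZ ℓ₁ ℓ₂ c R ↔ ∃ f : Fin ℓ₁ ⊕ Fin ℓ₂ → ℤ,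
      (∀ ρ ∈ R, f ρ ≤ -1) ∧ (∀ ρ ∉ R, 0 ≤ f ρ) ∧
      (∑ i, f (Sum.inl i)) + ∑ j, c j * f (Sum.inr j) = p.1 ∧
      (∑ j, f (Sum.inr j)) = p.2 := by
  simp [picTwoMacZ, picTwoPiZ, Set.mem_image, Prod.ext_iff, and_assoc, eq_comm]

lemma pic2_c_min {ℓ₂ : ℕ} (h2 : 2 ≤ ℓ₂) {c : Fin ℓ₂ → ℤ} (hmono : Antitone c) (j : Fin ℓ₂) :
    c ⟨ℓ₂ - 1, pic2_lt h2⟩ ≤ c j := by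
  apply hmono; rw [Fin.le_def]; have := j.isLt; simp; omega

lemma pic2_c_nonpos {ℓ₂ : ℕ} (h2 : 2 ≤ ℓ₂) {c : Fin ℓ₂ → ℤ} (hc0 : c ⟨0, pic2_pos h2⟩ = 0)
    (hmono : Antitone c) (j : Fin ℓ₂) : c j ≤ 0 := by
  rw [← hc0]; apply hmono; rw [Fin.le_def]; simp

lemma pic2_mac_empty {ℓ₁ ℓ₂ : ℕ} (h1 : 2 ≤ ℓ₁) (h2 : 2 ≤ ℓ₂) {c : Fin ℓ₂ → ℤ}
    (hmono : Antitone c) (p : ℤ × ℤ) :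
    p ∈ picTwoMacZ ℓ₁ ℓ₂ c ∅ ↔
      0 ≤ p.2 ∧ c ⟨ℓ₂ - 1, pic2_lt h2⟩ * p.2 ≤ p.1 := by
  rw [pic2_mem_mac]
  constructor
  · rintro ⟨f, -, hpos, hx, hy⟩
    simp only [Set.mem_empty_iff_false, not_false_iff, forall_true_left] at hpos
    have hy' : 0 ≤ p.2 := hy ▸ Finset.sum_nonneg fun j _ => hpos _
    refine ⟨hy', ?_⟩
    rw [← hx, ← hy, Finset.mul_sum]
    have h₁ : 0 ≤ ∑ i, f (Sum.inl i) := Finset.sum_nonneg fun i _ => hpos _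
    have h₂ : ∑ j, c ⟨ℓ₂ - 1, pic2_lt h2⟩ * f (Sum.inr j) ≤ ∑ j, c j * f (Sum.inr j) :=
      Finset.sum_le_sum fun j _ => mul_le_mul_of_nonneg_right (pic2_c_min h2 hmono j) (hpos _)
    omega
  · rintro ⟨hy, hx⟩
    refine ⟨Sum.elim
      (fun i : Fin ℓ₁ => if i = (⟨0, by omega⟩ : Fin ℓ₁) then p.1 - c ⟨ℓ₂ - 1, pic2_lt h2⟩ * p.2 else 0)
      (fun j : Fin ℓ₂ => if j = (⟨ℓ₂ - 1, pic2_lt h2⟩ : Fin ℓ₂) then p.2 else 0), by simp, ?_, ?_, ?_⟩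
    · rintro (i | j) - <;> simp only [Sum.elim_inl, Sum.elim_inr] <;> split <;> omega
    · simp only [Sum.elim_inl, Sum.elim_inr]
      rw [pic2_sum_mul_ite_const]
      simp
    · simp only [Sum.elim_inr]; simp

lemma pic2_mac_U {ℓ₁ ℓ₂ : ℕ} (h1 : 2 ≤ ℓ₁) (h2 : 2 ≤ ℓ₂) {c : Fin ℓ₂ → ℤ}
    (hc0 : c ⟨0, pic2_pos h2⟩ = 0) (hmono : Antitone c) (p : ℤ × ℤ) :
    p ∈ picTwoMacZ ℓ₁ ℓ₂ c (Set.range Sum.inl) ↔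
      0 ≤ p.2 ∧ p.1 ≤ -(ℓ₁ : ℤ) := by
  rw [pic2_mem_mac]
  constructor
  · rintro ⟨f, hneg, hpos, hx, hy⟩
    have hnl : ∀ i, f (Sum.inl i) ≤ -1 := fun i => hneg _ ⟨i, rfl⟩
    have hpr : ∀ j, 0 ≤ f (Sum.inr j) := fun j => hpos _ (by simp)
    have hy' : 0 ≤ p.2 := hy ▸ Finset.sum_nonneg fun j _ => hpr _
    refine ⟨hy', ?_⟩
    rw [← hx]
    have h₁ : ∑ i, f (Sum.inl i) ≤ ∑ _i : Fin ℓ₁, (-1 : ℤ) :=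
      Finset.sum_le_sum fun i _ => hnl i
    simp only [Finset.sum_const, Finset.card_univ, Fintype.card_fin, smul_neg,
      nsmul_eq_mul, mul_one] at h₁
    have h₂ : ∑ j, c j * f (Sum.inr j) ≤ 0 :=
      Finset.sum_nonpos fun j _ =>
        mul_nonpos_of_nonpos_of_nonneg (pic2_c_nonpos h2 hc0 hmono j) (hpr _)
    omega
  · rintro ⟨hy, hx⟩
    refine ⟨Sum.elim
      (fun i : Fin ℓ₁ => if i = (⟨0, by omega⟩ : Fin ℓ₁) then p.1 + (ℓ₁ : ℤ) - 1 else -1)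
      (fun j : Fin ℓ₂ => if j = (⟨0, pic2_pos h2⟩ : Fin ℓ₂) then p.2 else 0), ?_, ?_, ?_, ?_⟩
    · rintro ρ ⟨i, rfl⟩; simp only [Sum.elim_inl]; split <;> omega
    · rintro (i | j) hρ
      · exact absurd ⟨i, rfl⟩ hρ
      · simp only [Sum.elim_inr]; split <;> omega
    · simp only [Sum.elim_inl, Sum.elim_inr]
      rw [pic2_sum_ite_const, pic2_sum_mul_ite_const, hc0]
      push_cast; ring
    · simp only [Sum.elim_inr]; simp

lemma pic2_mac_V {ℓ₁ ℓ₂ : ℕ} (h1 : 2 ≤ ℓ₁) (h2 : 2 ≤ ℓ₂) {c : Fin ℓ₂ → ℤ}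
    (hc0 : c ⟨0, pic2_pos h2⟩ = 0) (hmono : Antitone c) (p : ℤ × ℤ) :
    p ∈ picTwoMacZ ℓ₁ ℓ₂ c (Set.range Sum.inr) ↔
      p.2 ≤ -(ℓ₂ : ℤ) ∧ -(∑ ν, c ν) ≤ p.1 := by
  rw [pic2_mem_mac]
  constructor
  · rintro ⟨f, hneg, hpos, hx, hy⟩
    have hnr : ∀ j, f (Sum.inr j) ≤ -1 := fun j => hneg _ ⟨j, rfl⟩
    have hpl : ∀ i, 0 ≤ f (Sum.inl i) := fun i => hpos _ (by simp)
    have hy' : p.2 ≤ -(ℓ₂ : ℤ) := by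
      rw [← hy]
      have h₁ : ∑ j, f (Sum.inr j) ≤ ∑ _j : Fin ℓ₂, (-1 : ℤ) :=
        Finset.sum_le_sum fun j _ => hnr j
      simpa using h₁
    refine ⟨hy', ?_⟩
    rw [← hx]
    have h₁ : 0 ≤ ∑ i, f (Sum.inl i) := Finset.sum_nonneg fun i _ => hpl _
    have h₂ : ∑ j, -c j ≤ ∑ j, c j * f (Sum.inr j) := by
      refine Finset.sum_le_sum fun j _ => ?_
      have := mul_le_mul_of_nonpos_left (hnr j) (pic2_c_nonpos h2 hc0 hmono j)
      simpa using this
    rw [Finset.sum_neg_distrib] at h₂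
    omega
  · rintro ⟨hy, hx⟩
    refine ⟨Sum.elim
      (fun i : Fin ℓ₁ => if i = (⟨0, by omega⟩ : Fin ℓ₁) then p.1 + (∑ ν, c ν) else 0)
      (fun j : Fin ℓ₂ => if j = (⟨0, pic2_pos h2⟩ : Fin ℓ₂) then p.2 + (ℓ₂ : ℤ) - 1 else -1),
      ?_, ?_, ?_, ?_⟩
    · rintro ρ ⟨j, rfl⟩; simp only [Sum.elim_inr]; split <;> omega
    · rintro (i | j) hρ
      · simp only [Sum.elim_inl]; split <;> omega
      · exact absurd ⟨j, rfl⟩ hρ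
    · simp only [Sum.elim_inl, Sum.elim_inr]
      rw [Finset.sum_ite_eq' Finset.univ, pic2_sum_mul_ite_const, hc0]
      simp
    · simp only [Sum.elim_inr]
      rw [pic2_sum_ite_const]
      push_cast; ring

set_option maxHeartbeats 1000000 in
lemma pic2_mac_UV {ℓ₁ ℓ₂ : ℕ} (h1 : 2 ≤ ℓ₁) (h2 : 2 ≤ ℓ₂) {c : Fin ℓ₂ → ℤ}
    (hc0 : c ⟨0, pic2_pos h2⟩ = 0) (hmono : Antitone c) (p : ℤ × ℤ) :
    p ∈ picTwoMacZ ℓ₁ ℓ₂ c (Set.range Sum.inl ∪ Set.range Sum.inr) ↔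
      p.2 ≤ -(ℓ₂ : ℤ) ∧
      p.1 ≤ c ⟨ℓ₂ - 1, pic2_lt h2⟩ * (p.2 + (ℓ₂ : ℤ)) - (ℓ₁ : ℤ) - (∑ ν, c ν) := by
  rw [pic2_mem_mac]
  constructor
  · rintro ⟨f, hneg, -, hx, hy⟩
    have hnl : ∀ i, f (Sum.inl i) ≤ -1 := fun i => hneg _ (Or.inl ⟨i, rfl⟩)
    have hnr : ∀ j, f (Sum.inr j) ≤ -1 := fun j => hneg _ (Or.inr ⟨j, rfl⟩)
    have hy' : p.2 ≤ -(ℓ₂ : ℤ) := by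
      rw [← hy]
      have h₁ : ∑ j, f (Sum.inr j) ≤ ∑ _j : Fin ℓ₂, (-1 : ℤ) :=
        Finset.sum_le_sum fun j _ => hnr j
      simpa using h₁
    refine ⟨hy', ?_⟩
    rw [← hx]
    have h₁ : ∑ i, f (Sum.inl i) ≤ ∑ _i : Fin ℓ₁, (-1 : ℤ) :=
      Finset.sum_le_sum fun i _ => hnl i
    simp only [Finset.sum_const, Finset.card_univ, Fintype.card_fin, smul_neg,
      nsmul_eq_mul, mul_one] at h₁
    have h₂ : ∑ j, c j * f (Sum.inr j)
        ≤ ∑ j, (c ⟨ℓ₂ - 1, pic2_lt h2⟩ * f (Sum.inr j) + (c ⟨ℓ₂ - 1, pic2_lt h2⟩ - c j)) := by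
      refine Finset.sum_le_sum fun j _ => ?_
      have hcm := pic2_c_min h2 hmono j
      nlinarith [hnr j]
    rw [Finset.sum_add_distrib, ← Finset.mul_sum, Finset.sum_sub_distrib,
      Finset.sum_const, Finset.card_univ, Fintype.card_fin, nsmul_eq_mul, hy] at h₂
    nlinarith
  · rintro ⟨hy, hx⟩
    refine ⟨Sum.elim
      (fun i : Fin ℓ₁ => if i = (⟨0, by omega⟩ : Fin ℓ₁) then
        p.1 - c ⟨ℓ₂ - 1, pic2_lt h2⟩ * (p.2 + (ℓ₂ : ℤ)) + (∑ ν, c ν) + (ℓ₁ : ℤ) - 1 else -1)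
      (fun j : Fin ℓ₂ => if j = (⟨ℓ₂ - 1, pic2_lt h2⟩ : Fin ℓ₂) then p.2 + (ℓ₂ : ℤ) - 1 else -1),
      ?_, ?_, ?_, ?_⟩
    · rintro ρ (⟨i, rfl⟩ | ⟨j, rfl⟩)
      · simp only [Sum.elim_inl]; split <;> omega
      · simp only [Sum.elim_inr]; split <;> omega
    · rintro (i | j) hρ
      · exact absurd (Or.inl ⟨i, rfl⟩) hρ
      · exact absurd (Or.inr ⟨j, rfl⟩) hρ
    · simp only [Sum.elim_inl, Sum.elim_inr]
      rw [pic2_sum_ite_const, pic2_sum_mul_ite_const]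
      push_cast; ring
    · simp only [Sum.elim_inr]
      rw [pic2_sum_ite_const]
      push_cast; ring

lemma pic2_final (l1 l2 x y a b S : ℤ) (h1 : 2 ≤ l1) (h2 : 2 ≤ l2) :
    (¬(0 ≤ y ∧ a ≤ x) ∧ ¬(0 ≤ y ∧ x ≤ -l1) ∧ ¬(y ≤ -l2 ∧ -S ≤ x) ∧
      ¬(y ≤ -l2 ∧ x ≤ b - l1 - S)) ↔
    ((-l2 < y ∧ y < 0) ∨ (0 ≤ y ∧ -l1 < x ∧ x < a) ∨
      (y ≤ -l2 ∧ x + S < 0 ∧ b - l1 < x + S)) := by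
  omega

/-- Description of the immaculate locus of a smooth complete toric variety of Picard
rank 2: `(x,y) ∈ ℤ²` avoids all four maculate sets iff `-ℓ₂ < y < 0`, or
`y ≥ 0` and `-ℓ₁ < x < c^{ℓ₂}·y`, or `y ≤ -ℓ₂` and `0 > x + ĉ > c^{ℓ₂}(y+ℓ₂) - ℓ₁`. -/
theorem statement10 (ℓ₁ ℓ₂ : ℕ) (h1 : 2 ≤ ℓ₁) (h2 : 2 ≤ ℓ₂)
    (c : Fin ℓ₂ → ℤ) (hc0 : c ⟨0, by omega⟩ = 0) (hmono : Antitone c)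
    (p : ℤ × ℤ) :
    (p ∉ picTwoMacZ ℓ₁ ℓ₂ c ∅ ∧
     p ∉ picTwoMacZ ℓ₁ ℓ₂ c (Set.range Sum.inl) ∧
     p ∉ picTwoMacZ ℓ₁ ℓ₂ c (Set.range Sum.inr) ∧
     p ∉ picTwoMacZ ℓ₁ ℓ₂ c (Set.range Sum.inl ∪ Set.range Sum.inr)) ↔
    ((-(ℓ₂ : ℤ) < p.2 ∧ p.2 < 0) ∨
     (0 ≤ p.2 ∧ -(ℓ₁ : ℤ) < p.1 ∧ p.1 < c ⟨ℓ₂ - 1, by omega⟩ * p.2) ∨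
     (p.2 ≤ -(ℓ₂ : ℤ) ∧ p.1 + (∑ ν, c ν) < 0 ∧
       c ⟨ℓ₂ - 1, by omega⟩ * (p.2 + (ℓ₂ : ℤ)) - (ℓ₁ : ℤ) < p.1 + (∑ ν, c ν))) := by
  rw [pic2_mac_empty h1 h2 hmono p, pic2_mac_U h1 h2 hc0 hmono p,
    pic2_mac_V h1 h2 hc0 hmono p, pic2_mac_UV h1 h2 hc0 hmono p]
  exact pic2_final (ℓ₁ : ℤ) (ℓ₂ : ℤ) p.1 p.2 (c ⟨ℓ₂ - 1, by omega⟩ * p.2)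
    (c ⟨ℓ₂ - 1, by omega⟩ * (p.2 + (ℓ₂ : ℤ))) (∑ ν, c ν) (by exact_mod_cast h1)
    (by exact_mod_cast h2)
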